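/- Under the setup of the block decomposition A = U*BUᴴ + U*C(U⊥)ᴴ + (U⊥)*DUᴴ + (U⊥)*E(U⊥)ᴴ with UUᴴh_i = h_i (i=1,2), the relay transmit power p_R(A) = ‖Ah₁‖²p₁ + ‖Ah₂‖²p₂ + tr(AAᴴ) satisfies p_R(A) ≥ p_R(U*BUᴴ), with equality when C = D = E = 0, for any p₁, p₂ ≥ 0. -/

import Mathlib

open Matrix



section helpers
variable {m k l : Type*} [Fintype m] [Fintype k] [Fintype l]

lemma star_dot_expand (Mm : Matrix m k ℂ) (N : Matrix m l ℂ)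
    (a : k → ℂ) (b : l → ℂ) :
    star (Mm *ᵥ a) ⬝ᵥ (N *ᵥ b) = star a ⬝ᵥ ((Mmᴴ * N) *ᵥ b) := by
  rw [star_mulVec, dotProduct_mulVec, vecMul_vecMul, ← dotProduct_mulVec]

lemma re_star_dot (v : m → ℂ) : (star v ⬝ᵥ v).re = ∑ i, ‖v i‖ ^ 2 := by
  simp [dotProduct, Complex.mul_conj', Complex.sq_norm,
    Complex.normSq_apply]

lemma re_star_dot_nonneg (v : m → ℂ) : 0 ≤ (star v ⬝ᵥ v).re := by
  rw [re_star_dot]; positivity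

lemma trace_mul_conj_re_nonneg {n : Type*} [Fintype n] (X : Matrix m n ℂ) :
    0 ≤ (X * Xᴴ).trace.re := by
  have : (X * Xᴴ).trace = ∑ i, ∑ j, X i j * star (X i j) := by
    simp [trace, diag_apply, mul_apply, conjTranspose_apply]
  rw [this, Complex.re_sum]
  refine Finset.sum_nonneg fun i _ => ?_
  rw [Complex.re_sum]
  refine Finset.sum_nonneg fun j _ => ?_
  rw [Complex.star_def, Complex.mul_conj, Complex.ofReal_re]
  exact Complex.normSq_nonneg _


lemma trace_form {M k₁ k₂ l₁ l₂ : Type*} [Fintype M] [Fintype k₁] [Fintype k₂]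
    [Fintype l₁] [Fintype l₂]
    (V : Matrix M k₁ ℂ) (Y : Matrix M l₁ ℂ) (W : Matrix M k₂ ℂ) (Q : Matrix M l₂ ℂ)
    (X : Matrix k₁ l₁ ℂ) (Z : Matrix k₂ l₂ ℂ) :
    ((V * X * Yᴴ) * (W * Z * Qᴴ)ᴴ).trace = ((Wᴴ * V) * X * (Yᴴ * Q) * Zᴴ).trace := by
  simp only [conjTranspose_mul, conjTranspose_conjTranspose]
  rw [show (V * X * Yᴴ) * (Q * (Zᴴ * Wᴴ)) = (V * (X * ((Yᴴ * Q) * Zᴴ))) * Wᴴ by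
        simp only [conjTranspose_conjTranspose, Matrix.mul_assoc],
      trace_mul_comm]
  simp only [Matrix.mul_assoc]
end helpers

section helpers2
variable {m k l : Type*} [Fintype m] [Fintype k] [Fintype l]

lemma conjTranspose_map_star (X : Matrix m k ℂ) : (X.map star)ᴴ = Xᵀ := by
  ext i j; simp [conjTranspose_apply, map_apply, transpose_apply]

lemma transpose_mul_map_star (X : Matrix m k ℂ) (Y : Matrix m l ℂ) :
    Xᵀ * (Y.map star) = (Xᴴ * Y).map star := by
  ext i j
  simp [mul_apply, map_apply, conjTranspose_apply, transpose_apply, mul_comm]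
end helpers2

/-- Relay power is minimized by keeping only the B-block: with
A = U*BUᴴ + U*C(U⊥)ᴴ + (U⊥)*DUᴴ + (U⊥)*E(U⊥)ᴴ and UUᴴhᵢ = hᵢ,
p_R(A) ≥ p_R(U*BUᴴ), with equality when C = D = E = 0. -/
theorem relay_power_minimized_by_B_block (M : ℕ)
    (h₁ h₂ : Fin M → ℂ) (p₁ p₂ : ℝ) (hp₁ : 0 ≤ p₁) (hp₂ : 0 ≤ p₂)
    (U : Matrix (Fin M) (Fin 2) ℂ) (hU : Uᴴ * U = 1)
    (hUh₁ : (U * Uᴴ) *ᵥ h₁ = h₁) (hUh₂ : (U * Uᴴ) *ᵥ h₂ = h₂)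
    (Uperp : Matrix (Fin M) (Fin (M - 2)) ℂ)
    (hUperp : Uperp * Uperpᴴ = 1 - U * Uᴴ) (hUperpOrtho : Uperpᴴ * Uperp = 1)
    (B : Matrix (Fin 2) (Fin 2) ℂ) (C : Matrix (Fin 2) (Fin (M - 2)) ℂ)
    (D : Matrix (Fin (M - 2)) (Fin 2) ℂ) (E : Matrix (Fin (M - 2)) (Fin (M - 2)) ℂ)
    (pR : Matrix (Fin M) (Fin M) ℂ → ℝ)
    (hpR : pR = fun A => (∑ i, ‖(A *ᵥ h₁) i‖ ^ 2) * p₁ + (∑ i, ‖(A *ᵥ h₂) i‖ ^ 2) * p₂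
        + (A * Aᴴ).trace.re)
    (A : Matrix (Fin M) (Fin M) ℂ)
    (hA : A = U.map star * B * Uᴴ + U.map star * C * Uperpᴴ
        + Uperp.map star * D * Uᴴ + Uperp.map star * E * Uperpᴴ) :
    pR (U.map star * B * Uᴴ) ≤ pR A ∧
    (C = 0 → D = 0 → E = 0 → pR A = pR (U.map star * B * Uᴴ)) := by

  constructor
  case right =>
    rintro rfl rfl rfl
    rw [hA]
    simp
  case left =>
  -- basic orthogonality facts
  have hPU : Uperpᴴ * U = 0 := by
    have h1 : Uperp * (Uperpᴴ * U) = 0 := by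
      rw [← Matrix.mul_assoc, hUperp, Matrix.sub_mul, Matrix.one_mul,
        Matrix.mul_assoc, hU, Matrix.mul_one, sub_self]
    calc Uperpᴴ * U = (Uperpᴴ * Uperp) * (Uperpᴴ * U) := by
            rw [hUperpOrtho, Matrix.one_mul]
      _ = Uperpᴴ * (Uperp * (Uperpᴴ * U)) := by rw [Matrix.mul_assoc]
      _ = 0 := by rw [h1, Matrix.mul_zero]
  have hUP : Uᴴ * Uperp = 0 := by
    have := congrArg conjTranspose hPU
    simpa using this
  have hVV : Uᵀ * (U.map star) = 1 := by
    rw [transpose_mul_map_star, hU]; simp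
  have hWW : Uperpᵀ * (Uperp.map star) = 1 := by
    rw [transpose_mul_map_star, hUperpOrtho]; simp
  have hVW : Uᵀ * (Uperp.map star) = 0 := by
    rw [transpose_mul_map_star, hUP]; simp
  have hWV : Uperpᵀ * (U.map star) = 0 := by
    rw [transpose_mul_map_star, hPU]; simp
  have hPh₁ : Uperpᴴ *ᵥ h₁ = 0 := by
    calc Uperpᴴ *ᵥ h₁ = Uperpᴴ *ᵥ ((U * Uᴴ) *ᵥ h₁) := by rw [hUh₁]
      _ = ((Uperpᴴ * U) * Uᴴ) *ᵥ h₁ := by rw [mulVec_mulVec, Matrix.mul_assoc]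
      _ = 0 := by rw [hPU, Matrix.zero_mul, zero_mulVec]
  have hPh₂ : Uperpᴴ *ᵥ h₂ = 0 := by
    calc Uperpᴴ *ᵥ h₂ = Uperpᴴ *ᵥ ((U * Uᴴ) *ᵥ h₂) := by rw [hUh₂]
      _ = ((Uperpᴴ * U) * Uᴴ) *ᵥ h₂ := by rw [mulVec_mulVec, Matrix.mul_assoc]
      _ = 0 := by rw [hPU, Matrix.zero_mul, zero_mulVec]
  -- key norm identity
  have key : ∀ (a : Fin 2 → ℂ) (d : Fin (M - 2) → ℂ),
      ∑ i, ‖((U.map star) *ᵥ a + (Uperp.map star) *ᵥ d) i‖ ^ 2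
        = (∑ i, ‖a i‖ ^ 2) + ∑ i, ‖d i‖ ^ 2 := by
    intro a d
    rw [← re_star_dot, star_add, add_dotProduct, dotProduct_add, dotProduct_add,
      star_dot_expand, star_dot_expand, star_dot_expand, star_dot_expand,
      conjTranspose_map_star, conjTranspose_map_star, hVV, hWW, hVW, hWV,
      Matrix.zero_mulVec, Matrix.one_mulVec, Matrix.zero_mulVec, Matrix.one_mulVec,
      dotProduct_zero, dotProduct_zero, add_zero, zero_add, Complex.add_re,
      re_star_dot, re_star_dot]
  set a₁ : Fin 2 → ℂ := B *ᵥ (Uᴴ *ᵥ h₁) with ha₁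
  set a₂ : Fin 2 → ℂ := B *ᵥ (Uᴴ *ᵥ h₂) with ha₂
  set d₁ : Fin (M - 2) → ℂ := D *ᵥ (Uᴴ *ᵥ h₁) with hd₁
  set d₂ : Fin (M - 2) → ℂ := D *ᵥ (Uᴴ *ᵥ h₂) with hd₂
  have hAh₁ : A *ᵥ h₁ = (U.map star) *ᵥ a₁ + (Uperp.map star) *ᵥ d₁ := by
    rw [hA]
    simp only [add_mulVec, ← mulVec_mulVec, hPh₁, mulVec_zero, add_zero]
    rfl
  have hAh₂ : A *ᵥ h₂ = (U.map star) *ᵥ a₂ + (Uperp.map star) *ᵥ d₂ := by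
    rw [hA]
    simp only [add_mulVec, ← mulVec_mulVec, hPh₂, mulVec_zero, add_zero]
    rfl
  have hTh₁ : (U.map star * B * Uᴴ) *ᵥ h₁
      = (U.map star) *ᵥ a₁ + (Uperp.map star) *ᵥ (0 : Fin (M - 2) → ℂ) := by
    simp only [← mulVec_mulVec, mulVec_zero, add_zero]
    rfl
  have hTh₂ : (U.map star * B * Uᴴ) *ᵥ h₂
      = (U.map star) *ᵥ a₂ + (Uperp.map star) *ᵥ (0 : Fin (M - 2) → ℂ) := by
    simp only [← mulVec_mulVec, mulVec_zero, add_zero]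
    rfl
  -- trace identities
  have t11 : ((U.map star * B * Uᴴ) * (U.map star * B * Uᴴ)ᴴ).trace = (B * Bᴴ).trace := by
    rw [trace_form, conjTranspose_map_star, hVV, hU, Matrix.one_mul, Matrix.mul_one]
  have tr_eq : (A * Aᴴ).trace
      = (B * Bᴴ).trace + (C * Cᴴ).trace + (D * Dᴴ).trace + (E * Eᴴ).trace := by
    rw [hA]
    simp only [conjTranspose_add, Matrix.add_mul, Matrix.mul_add, trace_add, trace_form,
      conjTranspose_map_star, hVV, hWW, hVW, hWV, hU, hUP, hPU, hUperpOrtho,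
      Matrix.one_mul, Matrix.mul_one, Matrix.zero_mul, Matrix.mul_zero, trace_zero,
      add_zero, zero_add]
  -- assemble
  rw [hpR]
  simp only [hAh₁, hAh₂, hTh₁, hTh₂, key, tr_eq, t11]
  have n1 : 0 ≤ ∑ i, ‖d₁ i‖ ^ 2 := by positivity
  have n2 : 0 ≤ ∑ i, ‖d₂ i‖ ^ 2 := by positivity
  have nC : 0 ≤ (C * Cᴴ).trace.re := trace_mul_conj_re_nonneg C
  have nD : 0 ≤ (D * Dᴴ).trace.re := trace_mul_conj_re_nonneg D
  have nE : 0 ≤ (E * Eᴴ).trace.re := trace_mul_conj_re_nonneg E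
  simp only [Complex.add_re]
  have m1 : 0 ≤ (∑ i, ‖d₁ i‖ ^ 2) * p₁ := mul_nonneg n1 hp₁
  have m2 : 0 ≤ (∑ i, ‖d₂ i‖ ^ 2) * p₂ := mul_nonneg n2 hp₂
  have z : ∑ i : Fin (M - 2), ‖(0 : Fin (M - 2) → ℂ) i‖ ^ 2 = 0 := by simp
  rw [z]
  nlinarith [m1, m2, nC, nD, nE]
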